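/- Let S be a set of positive integers, and let z, q ∈ ℂ satisfy |q| < 1/(1 + |z|). Then the family (z^{ℓ(c)} q^{|c|}) indexed by compositions c ∈ C_S is summable, the number 1 − z·∑_{n∈S} q^n is nonzero, and ∑_{c∈C_S} z^{ℓ(c)} q^{|c|} = 1/(1 − z·∑_{n∈S} q^n). -/

import Mathlib

open scoped BigOperators

set_option maxHeartbeats 1000000 in
private lemma aux_tuple {𝕜 : Type*} [RCLike 𝕜] {α : Type*} (g : α → 𝕜)
    (hg : Summable fun a => ‖g a‖) (n : ℕ) :
    (Summable fun v : Fin n → α => ∏ i, g (v i)) ∧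
    ((∑' v : Fin n → α, ∏ i, g (v i)) = (∑' a, g a) ^ n) ∧
    (Summable fun v : Fin n → α => ‖∏ i, g (v i)‖) ∧
    ((∑' v : Fin n → α, ‖∏ i, g (v i)‖) = (∑' a, ‖g a‖) ^ n) := by
  induction n with
  | zero =>
    refine ⟨?_, ?_, ?_, ?_⟩ <;> simp [Summable.of_finite]
  | succ n ih =>
    obtain ⟨h1, h2, h3, h4⟩ := ih
    set e : α × (Fin n → α) ≃ (Fin (n + 1) → α) := Fin.consEquiv (fun _ => α) with he
    have key : ∀ p : α × (Fin n → α),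
        (∏ i, g (e p i)) = g p.1 * ∏ i, g (p.2 i) := by
      intro p
      rw [Fin.prod_univ_succ]
      simp [he, Fin.consEquiv]
    have hg' : Summable fun a => ‖‖g a‖‖ := by simpa using hg
    have h3' : Summable fun v : Fin n → α => ‖‖∏ i, g (v i)‖‖ := by simpa using h3
    have hF : Summable fun p : α × (Fin n → α) => g p.1 * ∏ i, g (p.2 i) :=
      summable_mul_of_summable_norm (f := g) (g := fun v : Fin n → α => ∏ i, g (v i)) hg h3
    have hFn : Summable fun p : α × (Fin n → α) => ‖g p.1‖ * ‖∏ i, g (p.2 i)‖ :=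
      summable_mul_of_summable_norm (f := fun a => ‖g a‖) (g := fun v : Fin n → α => ‖∏ i, g (v i)‖) hg' h3'
    have hsum : Summable fun v : Fin (n + 1) → α => ∏ i, g (v i) := by
      rw [← e.summable_iff]
      have : ((fun v : Fin (n + 1) → α => ∏ i, g (v i)) ∘ e)
          = fun p : α × (Fin n → α) => g p.1 * ∏ i, g (p.2 i) := by
        funext p; simp only [Function.comp_apply, key]
      rw [this]; exact hF
    have hnorm : Summable fun v : Fin (n + 1) → α => ‖∏ i, g (v i)‖ := by
      rw [← e.summable_iff]
      have : ((fun v : Fin (n + 1) → α => ‖∏ i, g (v i)‖) ∘ e)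
          = fun p : α × (Fin n → α) => ‖g p.1‖ * ‖∏ i, g (p.2 i)‖ := by
        funext p; simp only [Function.comp_apply, key, norm_mul]
      rw [this]; exact hFn
    refine ⟨hsum, ?_, hnorm, ?_⟩
    · rw [← e.tsum_eq]
      calc (∑' p : α × (Fin n → α), ∏ i, g (e p i))
          = ∑' p : α × (Fin n → α), g p.1 * ∏ i, g (p.2 i) := by
            exact tsum_congr key
        _ = (∑' a, g a) * (∑' v : Fin n → α, ∏ i, g (v i)) :=
            tsum_mul_tsum_of_summable_norm (f := g) (g := fun v : Fin n → α => ∏ i, g (v i)) hg h3 |>.symm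
        _ = (∑' a, g a) ^ (n + 1) := by rw [h2, pow_succ']
    · rw [← e.tsum_eq]
      calc (∑' p : α × (Fin n → α), ‖∏ i, g (e p i)‖)
          = ∑' p : α × (Fin n → α), ‖g p.1‖ * ‖∏ i, g (p.2 i)‖ := by
            refine tsum_congr fun p => ?_
            rw [key, norm_mul]
        _ = (∑' a, ‖g a‖) * (∑' v : Fin n → α, ‖∏ i, g (v i)‖) :=
            tsum_mul_tsum_of_summable_norm (f := fun a => ‖g a‖) (g := fun v : Fin n → α => ‖∏ i, g (v i)‖) hg' h3' |>.symm
        _ = (∑' a, ‖g a‖) ^ (n + 1) := by rw [h4, pow_succ']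

private lemma list_prod_eq {𝕜 : Type*} [RCLike 𝕜] {α : Type*} (g : α → 𝕜) (l : List α) :
    (l.map g).prod = ∏ i : Fin l.length, g (l.get i) := by
  conv_lhs => rw [← List.ofFn_get l]
  rw [List.map_ofFn, List.prod_ofFn]
  rfl

set_option maxHeartbeats 1000000 in
private lemma aux_list {𝕜 : Type*} [RCLike 𝕜] {α : Type*} (g : α → 𝕜)
    (hg : Summable fun a => ‖g a‖) (hr : (∑' a, ‖g a‖) < 1) :
    (Summable fun l : List α => (l.map g).prod) ∧
    (1 - ∑' a, g a) ≠ 0 ∧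
    (∑' l : List α, (l.map g).prod) = (1 - ∑' a, g a)⁻¹ := by
  set r := ∑' a, ‖g a‖ with hrdef
  have hr0 : 0 ≤ r := tsum_nonneg fun a => norm_nonneg _
  have hts : ‖∑' a, g a‖ < 1 := lt_of_le_of_lt (norm_tsum_le_tsum_norm hg) hr
  have hne : (1 - ∑' a, g a) ≠ 0 := by
    intro h
    have : (∑' a, g a) = 1 := by linear_combination -h
    rw [this] at hts; simp at hts
  -- summability over the sigma type
  have hsigN : Summable fun p : Σ n, Fin n → α => ‖∏ i, g (p.2 i)‖ := by
    rw [summable_sigma_of_nonneg (fun p => norm_nonneg _)]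
    refine ⟨fun n => (aux_tuple g hg n).2.2.1, ?_⟩
    have : (fun n => ∑' v : Fin n → α, ‖∏ i, g (v i)‖) = fun n => r ^ n := by
      funext n; exact (aux_tuple g hg n).2.2.2
    rw [this]
    exact summable_geometric_of_lt_one hr0 hr
  have hsig : Summable fun p : Σ n, Fin n → α => ∏ i, g (p.2 i) := hsigN.of_norm
  have htsig : (∑' p : Σ n, Fin n → α, ∏ i, g (p.2 i)) = (1 - ∑' a, g a)⁻¹ := by
    rw [Summable.tsum_sigma hsig]
    have : (fun n => ∑' v : Fin n → α, ∏ i, g (v i)) = fun n => (∑' a, g a) ^ n := by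
      funext n; exact (aux_tuple g hg n).2.1
    rw [this]
    exact tsum_geometric_of_norm_lt_one hts
  set e : List α ≃ Σ n, Fin n → α := List.equivSigmaTuple with he
  have hcomp : ((fun p : Σ n, Fin n → α => ∏ i, g (p.2 i)) ∘ e)
      = fun l : List α => (l.map g).prod := by
    funext l
    simp only [Function.comp_apply, he, List.equivSigmaTuple]
    exact (list_prod_eq g l).symm
  refine ⟨?_, hne, ?_⟩
  · rw [← hcomp]
    exact (e.summable_iff).mpr hsig
  · rw [← hcomp]
    rw [show tsum ((fun p : Σ n, Fin n → α => ∏ i, g (p.2 i)) ∘ e)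
        = ∑' l : List α, ∏ i : Fin (e l).1, g ((e l).2 i) from rfl]
    rw [e.tsum_eq (fun p : Σ n, Fin n → α => ∏ i, g (p.2 i))]
    exact htsig

private def listEquiv (S : Set ℕ) : {l : List ℕ // ∀ i ∈ l, i ∈ S} ≃ List S where
  toFun c := c.1.pmap (fun n h => (⟨n, h⟩ : S)) c.2
  invFun l := ⟨l.map Subtype.val, by
    intro i hi
    rcases List.mem_map.mp hi with ⟨a, _, rfl⟩
    exact a.2⟩
  left_inv c := by
    ext1
    simp [List.map_pmap]
  right_inv l := by
    induction l with
    | nil => rfl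
    | cons a l ih => simp_all [List.pmap_map]

private lemma len_sum_eq (S : Set ℕ) (z q : ℂ) (l : List S) :
    ((l.map fun n : S => z * q ^ (n : ℕ)).prod)
      = z ^ l.length * q ^ (l.map (Subtype.val)).sum := by
  induction l with
  | nil => simp
  | cons a l ih =>
    simp only [List.map_cons, List.prod_cons, List.length_cons, List.sum_cons, ih]
    rw [pow_succ', pow_add]
    ring

set_option maxHeartbeats 1000000 in
theorem composition_generating_function
    (S : Set ℕ) (hS : ∀ n ∈ S, 0 < n) (z q : ℂ)
    (hq : ‖q‖ < 1 / (1 + ‖z‖)) :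
    Summable (fun c : {l : List ℕ // ∀ i ∈ l, i ∈ S} =>
        z ^ c.val.length * q ^ c.val.sum) ∧
    1 - z * ∑' n : S, q ^ (n : ℕ) ≠ 0 ∧
    ∑' c : {l : List ℕ // ∀ i ∈ l, i ∈ S}, z ^ c.val.length * q ^ c.val.sum
      = (1 - z * ∑' n : S, q ^ (n : ℕ))⁻¹ := by
  set x := ‖q‖ with hx
  set u := ‖z‖ with hu
  have hx0 : 0 ≤ x := norm_nonneg q
  have hu0 : 0 ≤ u := norm_nonneg z
  have hqz : x * (1 + u) < 1 := by
    rw [← lt_div_iff₀ (by linarith : (0:ℝ) < 1 + u)]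
    exact hq
  have hx1 : x < 1 := by nlinarith
  -- the one-variable family
  set g : S → ℂ := fun n => z * q ^ (n : ℕ) with hgdef
  have hgnorm : ∀ n : S, ‖g n‖ = u * x ^ (n : ℕ) := by
    intro n
    simp [hgdef, hx, hu, map_mul, map_pow]
  have hgeo : Summable fun m : ℕ => x ^ m := summable_geometric_of_lt_one hx0 hx1
  have hgS : Summable fun n : S => x ^ (n : ℕ) := hgeo.subtype S
  have hg : Summable fun n : S => ‖g n‖ := by
    refine Summable.congr (hgS.mul_left u) ?_
    intro n; exact (hgnorm n).symm
  -- bound the sum of norms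
  have hsub : (∑' n : S, x ^ (n : ℕ)) ≤ ∑' m : ℕ, x ^ (m + 1) := by
    have hg1 : Summable fun m : ℕ => x ^ (m + 1) := by
      refine Summable.congr (hgeo.mul_right x) ?_
      intro m; rw [← pow_succ]
    refine Summable.tsum_le_tsum_of_inj (fun n : S => (n : ℕ) - 1) ?_ ?_ ?_ hgS hg1
    · intro a b hab
      simp only at hab
      have ha := hS a a.2
      have hb := hS b b.2
      ext
      omega
    · intro c _; positivity
    · intro n
      have hn := hS n n.2
      have : ((n : ℕ) - 1) + 1 = (n : ℕ) := by omega
      rw [this]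
  have hsum1 : (∑' m : ℕ, x ^ (m + 1)) = x * (1 - x)⁻¹ := by
    calc (∑' m : ℕ, x ^ (m + 1)) = ∑' m : ℕ, x * x ^ m := by
          refine tsum_congr fun m => ?_
          rw [pow_succ']
      _ = x * ∑' m : ℕ, x ^ m := tsum_mul_left
      _ = x * (1 - x)⁻¹ := by rw [tsum_geometric_of_lt_one hx0 hx1]
  have hr : (∑' n : S, ‖g n‖) < 1 := by
    have h1 : (∑' n : S, ‖g n‖) = u * ∑' n : S, x ^ (n : ℕ) := by
      rw [show (fun n : S => ‖g n‖) = fun n : S => u * x ^ (n : ℕ) from funext hgnorm]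
      exact tsum_mul_left
    rw [h1]
    calc u * ∑' n : S, x ^ (n : ℕ) ≤ u * (x * (1 - x)⁻¹) := by
          rw [← hsum1]
          exact mul_le_mul_of_nonneg_left hsub hu0
      _ < 1 := by
          rw [← div_eq_mul_inv, mul_div_assoc']
          rw [div_lt_one (by linarith)]
          nlinarith
  obtain ⟨hsumm, hne, htsum⟩ := aux_list g hg hr
  have htg : (∑' n : S, g n) = z * ∑' n : S, q ^ (n : ℕ) := tsum_mul_left
  set E := listEquiv S with hE
  have hcomp : ((fun l : List S => (l.map g).prod) ∘ E)
      = fun c : {l : List ℕ // ∀ i ∈ l, i ∈ S} => z ^ c.val.length * q ^ c.val.sum := by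
    funext c
    simp only [Function.comp_apply]
    rw [len_sum_eq S z q (E c)]
    have h1 : (E c).length = c.val.length := by
      simp [hE, listEquiv]
    have h2 : (E c).map Subtype.val = c.val := by
      simp [hE, listEquiv, List.map_pmap]
    rw [h1, h2]
  rw [← htg]
  refine ⟨?_, hne, ?_⟩
  · rw [← hcomp]
    exact (E.summable_iff).mpr hsumm
  · rw [← hcomp]
    rw [show tsum ((fun l : List S => (l.map g).prod) ∘ E)
        = ∑' c : {l : List ℕ // ∀ i ∈ l, i ∈ S}, ((E c).map g).prod from rfl]
    rw [E.tsum_eq (fun l : List S => (l.map g).prod)]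
    exact htsum
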